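/- There is no expectation representation for quantum systems described by the two-dimensional complex Hilbert space ℂ². That is, there is no triple (Λ, μ, F) where Λ is a measurable space, μ is a convex-linear map from density operators on ℂ² to probability measures on Λ, and F maps each rank-1 projection E on ℂ² to a measurable function Λ → [0,1], such that Tr(ρE) = ∫_Λ F(E) dμ(ρ) for all density operators ρ and all rank-1 projections E. -/

import Mathlib

open MeasureTheory Matrix ComplexOrder

/-- A density operator on ℂⁿ: positive semidefinite with trace 1. -/
def IsDensity {n : ℕ} (ρ : Matrix (Fin n) (Fin n) ℂ) : Prop :=
  ρ.PosSemidef ∧ ρ.trace = 1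

/-- A rank-1 projection: Hermitian idempotent of rank 1. -/
def IsRankOneProj {n : ℕ} (E : Matrix (Fin n) (Fin n) ℂ) : Prop :=
  E.IsHermitian ∧ E * E = E ∧ E.rank = 1

namespace NoExpRep

abbrev Mat2 := Matrix (Fin 2) (Fin 2) ℂ
abbrev Row2 := Matrix (Fin 1) (Fin 2) ℂ

noncomputable def Pa : Mat2 := !![1,0;0,0]
noncomputable def Pb : Mat2 := !![4/5,2/5;2/5,1/5]
noncomputable def Pc : Mat2 := !![1/2,1/2;1/2,1/2]
noncomputable def Qa : Mat2 := !![0,0;0,1]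
noncomputable def Qb : Mat2 := !![1/5,-2/5;-2/5,4/5]
noncomputable def Qc : Mat2 := !![1/2,-1/2;-1/2,1/2]
noncomputable def R0 : Mat2 := !![1/2,0;0,1/2]

theorem psd_smul (c : ℝ) (hc : 0 ≤ c) (M : Mat2) (hM : M.PosSemidef) :
    ((c:ℂ) • M).PosSemidef := by
  constructor
  · unfold Matrix.IsHermitian
    rw [Matrix.conjTranspose_smul, hM.1.eq]
    simp
  · intro x
    have e : (x.sum fun i xi => x.sum fun j xj => star xi * ((c:ℂ) • M) i j * xj)
        = (c:ℂ) * x.sum fun i xi => x.sum fun j xj => star xi * M i j * xj := by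
      simp only [Finsupp.sum, Finset.mul_sum, Matrix.smul_apply, smul_eq_mul]
      exact Finset.sum_congr rfl fun i _ => Finset.sum_congr rfl fun j _ => by ring
    rw [e]
    exact mul_nonneg (Complex.zero_le_real.mpr hc) (hM.2 x)

theorem rank_ne_zero' {m n : Type*} [Fintype m] [Fintype n] [DecidableEq n]
    (A : Matrix m n ℂ) (hA : A ≠ 0) : A.rank ≠ 0 := by
  intro h
  apply hA
  rw [Matrix.rank] at h
  have : LinearMap.range A.mulVecLin = ⊥ := by
    rw [← Submodule.finrank_eq_zero (R := ℂ)]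
    exact h
  rw [LinearMap.range_eq_bot] at this
  ext i j
  have := congrFun (congrArg (fun f => f (Pi.single j 1)) (congrArg DFunLike.coe this)) i
  simpa [Matrix.mulVecLin_apply, Matrix.mulVec_single] using this

theorem rank_outer (c : ℂ) (hc : c ≠ 0) (w : Row2) (hw : w ≠ 0) :
    (c • (wᴴ * w)).rank = 1 := by
  have h1 : c • (wᴴ * w) = (c • (1 : Mat2)) * (wᴴ * w) := by
    rw [Matrix.smul_mul, one_mul]
  rw [h1, Matrix.rank_mul_eq_right_of_isUnit_det]
  · rw [Matrix.rank_conjTranspose_mul_self]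
    have h2 : w.rank ≤ 1 := by
      simpa using w.rank_le_card_height
    have h3 : w.rank ≠ 0 := rank_ne_zero' w hw
    omega
  · simp [Matrix.det_smul]
    exact hc

theorem density_of (M N : Mat2) (c : ℝ) (hc : 0 ≤ c) (hN : N.PosSemidef)
    (hM : M = (c:ℂ) • N) (htr : M.trace = 1) : IsDensity M :=
  ⟨hM ▸ psd_smul c hc N hN, htr⟩

theorem rankone_of (M : Mat2) (c : ℝ) (hc : 0 < c) (w : Row2) (hw : w ≠ 0)
    (hM : M = (c:ℂ) • (wᴴ * w)) (hM2 : M * M = M) : IsRankOneProj M :=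
  ⟨(hM ▸ psd_smul c hc.le _ (Matrix.posSemidef_conjTranspose_mul_self w)).1, hM2,
    hM ▸ rank_outer (c:ℂ) (by exact_mod_cast hc.ne') w hw⟩

lemma int_bdd {Λ : Type} [MeasurableSpace Λ] (μ : Measure Λ) [IsFiniteMeasure μ]
    (f : Λ → ℝ) (hf : Measurable f) (C : ℝ) (hC : ∀ l, |f l| ≤ C) : Integrable f μ :=
  ⟨hf.aestronglyMeasurable, HasFiniteIntegral.of_bounded (C := C) (Filter.Eventually.of_forall hC)⟩

lemma int_bdd01 {Λ : Type} [MeasurableSpace Λ] (μ : Measure Λ) [IsFiniteMeasure μ]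
    (f : Λ → ℝ) (hf : Measurable f) (hf0 : ∀ l, 0 ≤ f l) (hf1 : ∀ l, f l ≤ 1) :
    Integrable f μ :=
  int_bdd μ f hf 1 (fun l => abs_le.2 ⟨by linarith [hf0 l], hf1 l⟩)

lemma ae_one_of_integral_one {Λ : Type} [MeasurableSpace Λ] (μ : Measure Λ)
    [IsProbabilityMeasure μ] (g : Λ → ℝ) (hgm : Measurable g) (hg0 : ∀ l, 0 ≤ g l)
    (hg1 : ∀ l, g l ≤ 1) (hint : ∫ l, g l ∂μ = 1) : g =ᵐ[μ] fun _ => 1 := by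
  have hgi : Integrable g μ := int_bdd01 μ g hgm hg0 hg1
  have h0 : ∫ l, (1 - g l) ∂μ = 0 := by
    rw [integral_sub (integrable_const 1) hgi, hint]
    simp
  have := (integral_eq_zero_iff_of_nonneg (f := fun l => 1 - g l)
    (fun l => by simp only [Pi.zero_apply]; linarith [hg1 l])
    ((integrable_const (1:ℝ)).sub hgi)).mp h0
  filter_upwards [this] with l hl
  have : (1:ℝ) - g l = 0 := hl
  linarith

lemma ae_zero_of_integral_zero {Λ : Type} [MeasurableSpace Λ] (μ : Measure Λ)
    [IsFiniteMeasure μ] (g : Λ → ℝ) (hgm : Measurable g) (hg0 : ∀ l, 0 ≤ g l) (hg1 : ∀ l, g l ≤ 1)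
    (hint : ∫ l, g l ∂μ = 0) : g =ᵐ[μ] fun _ => 0 :=
  (integral_eq_zero_iff_of_nonneg hg0 (int_bdd01 μ g hgm hg0 hg1)).mp hint

lemma key_integral {Λ : Type} [MeasurableSpace Λ] (ν μ1 ν1 : Measure Λ)
    [IsProbabilityMeasure μ1] [IsProbabilityMeasure ν1]
    (hν : ν = ENNReal.ofReal (1/2) • μ1 + ENNReal.ofReal (1/2) • ν1)
    (g h : Λ → ℝ) (hgm : Measurable g) (hg0 : ∀ l, 0 ≤ g l) (hg1 : ∀ l, g l ≤ 1)
    (hhm : Measurable h) (hh0b : ∀ l, 0 ≤ h l) (hh1b : ∀ l, h l ≤ 1)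
    (hh1 : h =ᵐ[μ1] fun _ => 1) (hh0 : h =ᵐ[ν1] fun _ => 0)
    (t : ℝ) (ht1 : ∫ l, g l ∂μ1 = t) (ht2 : ∫ l, g l ∂ν1 = 1 - t) :
    ∫ l, |g l - h l| ∂ν = 1 - t := by
  have hgi1 : Integrable g μ1 := int_bdd01 μ1 g hgm hg0 hg1
  have habs : ∀ (τ : Measure Λ), IsFiniteMeasure τ → Integrable (fun l => |g l - h l|) τ := by
    intro τ hτ
    exact int_bdd τ _ (hgm.sub hhm).abs 1
      (fun l => by
        rw [abs_abs]
        exact abs_le.2 ⟨by linarith [hg0 l, hh1b l], by linarith [hg1 l, hh0b l]⟩)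
  have e1 : ∫ l, |g l - h l| ∂μ1 = 1 - t := by
    have : (fun l => |g l - h l|) =ᵐ[μ1] fun l => 1 - g l := by
      filter_upwards [hh1] with l hl
      rw [hl, abs_sub_comm, abs_of_nonneg (by linarith [hg1 l])]
    rw [integral_congr_ae this, integral_sub (integrable_const 1) hgi1, ht1]
    simp
  have e2 : ∫ l, |g l - h l| ∂ν1 = 1 - t := by
    have : (fun l => |g l - h l|) =ᵐ[ν1] fun l => g l := by
      filter_upwards [hh0] with l hl
      rw [hl, sub_zero, abs_of_nonneg (hg0 l)]
    rw [integral_congr_ae this, ht2]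
  rw [hν, integral_add_measure, integral_smul_measure, integral_smul_measure, e1, e2,
    ENNReal.toReal_ofReal (by norm_num : (0:ℝ) ≤ 1/2)]
  · rw [smul_eq_mul]; ring
  · exact (habs μ1 inferInstance).smul_measure ENNReal.ofReal_ne_top
  · exact (habs ν1 inferInstance).smul_measure ENNReal.ofReal_ne_top

end NoExpRep

open NoExpRep

/-- There is no expectation representation for quantum systems described by ℂ². -/
theorem no_expectation_representation_dim_two :
    ¬ ∃ (Λ : Type) (_ : MeasurableSpace Λ)
        (μ : Matrix (Fin 2) (Fin 2) ℂ → Measure Λ)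
        (F : Matrix (Fin 2) (Fin 2) ℂ → Λ → ℝ),
      (∀ ρ, IsDensity ρ → IsProbabilityMeasure (μ ρ)) ∧
      (∀ (p₁ p₂ : ℝ) (ρ₁ ρ₂ : Matrix (Fin 2) (Fin 2) ℂ),
        0 ≤ p₁ → 0 ≤ p₂ → p₁ + p₂ = 1 → IsDensity ρ₁ → IsDensity ρ₂ →
        μ ((p₁ : ℂ) • ρ₁ + (p₂ : ℂ) • ρ₂)
          = ENNReal.ofReal p₁ • μ ρ₁ + ENNReal.ofReal p₂ • μ ρ₂) ∧
      (∀ E, IsRankOneProj E → Measurable (F E)) ∧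
      (∀ E, IsRankOneProj E → ∀ l, F E l ∈ Set.Icc (0 : ℝ) 1) ∧
      (∀ ρ E, IsDensity ρ → IsRankOneProj E →
        (ρ * E).trace = ((∫ l, F E l ∂(μ ρ) : ℝ) : ℂ)) := by
  rintro ⟨Λ, mΛ, μ, F, hprob, hlin, hmeas, hbdd, hrep⟩
  -- densities
  have hdPa : IsDensity Pa :=
    density_of Pa ((!![1,0] : Row2)ᴴ * !![1,0]) 1 one_pos.le
      (Matrix.posSemidef_conjTranspose_mul_self _)
      (by ext i j; fin_cases i <;> fin_cases j <;>
        norm_num [Pa, Matrix.mul_apply, Fin.sum_univ_one, Matrix.conjTranspose_apply])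
      (by norm_num [Pa, Matrix.trace_fin_two])
  have hdPb : IsDensity Pb :=
    density_of Pb ((!![2,1] : Row2)ᴴ * !![2,1]) (1/5) (by norm_num)
      (Matrix.posSemidef_conjTranspose_mul_self _)
      (by ext i j; fin_cases i <;> fin_cases j <;>
        norm_num [Pb, Matrix.mul_apply, Fin.sum_univ_one, Matrix.conjTranspose_apply])
      (by norm_num [Pb, Matrix.trace_fin_two])
  have hdPc : IsDensity Pc :=
    density_of Pc ((!![1,1] : Row2)ᴴ * !![1,1]) (1/2) (by norm_num)
      (Matrix.posSemidef_conjTranspose_mul_self _)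
      (by ext i j; fin_cases i <;> fin_cases j <;>
        norm_num [Pc, Matrix.mul_apply, Fin.sum_univ_one, Matrix.conjTranspose_apply])
      (by norm_num [Pc, Matrix.trace_fin_two])
  have hdQa : IsDensity Qa :=
    density_of Qa ((!![0,1] : Row2)ᴴ * !![0,1]) 1 one_pos.le
      (Matrix.posSemidef_conjTranspose_mul_self _)
      (by ext i j; fin_cases i <;> fin_cases j <;>
        norm_num [Qa, Matrix.mul_apply, Fin.sum_univ_one, Matrix.conjTranspose_apply])
      (by norm_num [Qa, Matrix.trace_fin_two])
  have hdQb : IsDensity Qb :=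
    density_of Qb ((!![1,-2] : Row2)ᴴ * !![1,-2]) (1/5) (by norm_num)
      (Matrix.posSemidef_conjTranspose_mul_self _)
      (by ext i j; fin_cases i <;> fin_cases j <;>
        norm_num [Qb, Matrix.mul_apply, Fin.sum_univ_one, Matrix.conjTranspose_apply])
      (by norm_num [Qb, Matrix.trace_fin_two])
  have hdQc : IsDensity Qc :=
    density_of Qc ((!![1,-1] : Row2)ᴴ * !![1,-1]) (1/2) (by norm_num)
      (Matrix.posSemidef_conjTranspose_mul_self _)
      (by ext i j; fin_cases i <;> fin_cases j <;>
        norm_num [Qc, Matrix.mul_apply, Fin.sum_univ_one, Matrix.conjTranspose_apply])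
      (by norm_num [Qc, Matrix.trace_fin_two])
  have hdR0 : IsDensity R0 :=
    density_of R0 1 (1/2) (by norm_num) Matrix.PosSemidef.one
      (by ext i j; fin_cases i <;> fin_cases j <;>
        norm_num [R0, Matrix.one_apply])
      (by norm_num [R0, Matrix.trace_fin_two])
  -- rank-one projections
  have hrPa : IsRankOneProj Pa :=
    rankone_of Pa 1 one_pos !![1,0]
      (by intro h; simpa using congrFun (congrFun h 0) 0)
      (by ext i j; fin_cases i <;> fin_cases j <;>
        norm_num [Pa, Matrix.mul_apply, Fin.sum_univ_one, Matrix.conjTranspose_apply])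
      (by ext i j; fin_cases i <;> fin_cases j <;> norm_num [Pa, Matrix.mul_apply, Fin.sum_univ_two])
  have hrPb : IsRankOneProj Pb :=
    rankone_of Pb (1/5) (by norm_num) !![2,1]
      (by intro h; simpa using congrFun (congrFun h 0) 0)
      (by ext i j; fin_cases i <;> fin_cases j <;>
        norm_num [Pb, Matrix.mul_apply, Fin.sum_univ_one, Matrix.conjTranspose_apply])
      (by ext i j; fin_cases i <;> fin_cases j <;> norm_num [Pb, Matrix.mul_apply, Fin.sum_univ_two])
  have hrPc : IsRankOneProj Pc :=
    rankone_of Pc (1/2) (by norm_num) !![1,1]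
      (by intro h; simpa using congrFun (congrFun h 0) 0)
      (by ext i j; fin_cases i <;> fin_cases j <;>
        norm_num [Pc, Matrix.mul_apply, Fin.sum_univ_one, Matrix.conjTranspose_apply])
      (by ext i j; fin_cases i <;> fin_cases j <;> norm_num [Pc, Matrix.mul_apply, Fin.sum_univ_two])
  -- probability measures
  haveI := hprob Pa hdPa
  haveI := hprob Pb hdPb
  haveI := hprob Pc hdPc
  haveI := hprob Qa hdQa
  haveI := hprob Qb hdQb
  haveI := hprob Qc hdQc
  haveI := hprob R0 hdR0
  -- convex decompositions of the maximally mixed state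
  have half : (0:ℝ) ≤ 1/2 := by norm_num
  have hsum : (1/2 : ℝ) + 1/2 = 1 := by norm_num
  have hmb : (((1/2:ℝ)):ℂ) • Pb + (((1/2:ℝ)):ℂ) • Qb = R0 := by
    ext i j; fin_cases i <;> fin_cases j <;> norm_num [Pb, Qb, R0]
  have hmc : (((1/2:ℝ)):ℂ) • Pc + (((1/2:ℝ)):ℂ) • Qc = R0 := by
    ext i j; fin_cases i <;> fin_cases j <;> norm_num [Pc, Qc, R0]
  have hb := hlin (1/2) (1/2) Pb Qb half half hsum hdPb hdQb
  have hc := hlin (1/2) (1/2) Pc Qc half half hsum hdPc hdQc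
  rw [hmb] at hb
  rw [hmc] at hc
  -- integral values from traces
  have tr_int : ∀ (ρ E : Mat2), IsDensity ρ → IsRankOneProj E → ∀ t : ℝ,
      (ρ * E).trace = ((t:ℝ):ℂ) → ∫ l, F E l ∂(μ ρ) = t := by
    intro ρ E hρ hE t ht
    have := hrep ρ E hρ hE
    rw [ht] at this
    exact_mod_cast this.symm
  have iPbPb : ∫ l, F Pb l ∂(μ Pb) = 1 := tr_int Pb Pb hdPb hrPb 1
    (by norm_num [Pb, Matrix.mul_fin_two, Matrix.trace_fin_two])
  have iQbPb : ∫ l, F Pb l ∂(μ Qb) = 0 := tr_int Qb Pb hdQb hrPb 0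
    (by norm_num [Qb, Pb, Matrix.mul_fin_two, Matrix.trace_fin_two])
  have iPcPc : ∫ l, F Pc l ∂(μ Pc) = 1 := tr_int Pc Pc hdPc hrPc 1
    (by norm_num [Pc, Matrix.mul_fin_two, Matrix.trace_fin_two])
  have iQcPc : ∫ l, F Pc l ∂(μ Qc) = 0 := tr_int Qc Pc hdQc hrPc 0
    (by norm_num [Qc, Pc, Matrix.mul_fin_two, Matrix.trace_fin_two])
  have iPbPa : ∫ l, F Pa l ∂(μ Pb) = 4/5 := tr_int Pb Pa hdPb hrPa (4/5)
    (by norm_num [Pb, Pa, Matrix.mul_fin_two, Matrix.trace_fin_two])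
  have iQbPa : ∫ l, F Pa l ∂(μ Qb) = 1 - 4/5 := tr_int Qb Pa hdQb hrPa (1 - 4/5)
    (by norm_num [Qb, Pa, Matrix.mul_fin_two, Matrix.trace_fin_two])
  have iPcPb : ∫ l, F Pb l ∂(μ Pc) = 9/10 := tr_int Pc Pb hdPc hrPb (9/10)
    (by norm_num [Pc, Pb, Matrix.mul_fin_two, Matrix.trace_fin_two])
  have iQcPb : ∫ l, F Pb l ∂(μ Qc) = 1 - 9/10 := tr_int Qc Pb hdQc hrPb (1 - 9/10)
    (by norm_num [Qc, Pb, Matrix.mul_fin_two, Matrix.trace_fin_two])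
  have iPcPa : ∫ l, F Pa l ∂(μ Pc) = 1/2 := tr_int Pc Pa hdPc hrPa (1/2)
    (by norm_num [Pc, Pa, Matrix.mul_fin_two, Matrix.trace_fin_two])
  have iQcPa : ∫ l, F Pa l ∂(μ Qc) = 1 - 1/2 := tr_int Qc Pa hdQc hrPa (1 - 1/2)
    (by norm_num [Qc, Pa, Matrix.mul_fin_two, Matrix.trace_fin_two])
  -- bounds and measurability
  have mFa := hmeas Pa hrPa
  have mFb := hmeas Pb hrPb
  have mFc := hmeas Pc hrPc
  have b0a : ∀ l, 0 ≤ F Pa l := fun l => (hbdd Pa hrPa l).1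
  have b1a : ∀ l, F Pa l ≤ 1 := fun l => (hbdd Pa hrPa l).2
  have b0b : ∀ l, 0 ≤ F Pb l := fun l => (hbdd Pb hrPb l).1
  have b1b : ∀ l, F Pb l ≤ 1 := fun l => (hbdd Pb hrPb l).2
  have b0c : ∀ l, 0 ≤ F Pc l := fun l => (hbdd Pc hrPc l).1
  have b1c : ∀ l, F Pc l ≤ 1 := fun l => (hbdd Pc hrPc l).2
  -- a.e. facts
  have aeb1 : F Pb =ᵐ[μ Pb] fun _ => 1 :=
    ae_one_of_integral_one (μ Pb) (F Pb) mFb b0b b1b iPbPb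
  have aeb0 : F Pb =ᵐ[μ Qb] fun _ => 0 :=
    ae_zero_of_integral_zero (μ Qb) (F Pb) mFb b0b b1b iQbPb
  have aec1 : F Pc =ᵐ[μ Pc] fun _ => 1 :=
    ae_one_of_integral_one (μ Pc) (F Pc) mFc b0c b1c iPcPc
  have aec0 : F Pc =ᵐ[μ Qc] fun _ => 0 :=
    ae_zero_of_integral_zero (μ Qc) (F Pc) mFc b0c b1c iQcPc
  -- distances
  have Dab : ∫ l, |F Pa l - F Pb l| ∂(μ R0) = 1 - 4/5 :=
    key_integral (μ R0) (μ Pb) (μ Qb) hb (F Pa) (F Pb) mFa b0a b1a mFb b0b b1b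
      aeb1 aeb0 (4/5) iPbPa iQbPa
  have Dbc : ∫ l, |F Pb l - F Pc l| ∂(μ R0) = 1 - 9/10 :=
    key_integral (μ R0) (μ Pc) (μ Qc) hc (F Pb) (F Pc) mFb b0b b1b mFc b0c b1c
      aec1 aec0 (9/10) iPcPb iQcPb
  have Dac : ∫ l, |F Pa l - F Pc l| ∂(μ R0) = 1 - 1/2 :=
    key_integral (μ R0) (μ Pc) (μ Qc) hc (F Pa) (F Pc) mFa b0a b1a mFc b0c b1c
      aec1 aec0 (1/2) iPcPa iQcPa
  -- triangle inequality
  have hint : ∀ (f g : Λ → ℝ), Measurable f → Measurable g → (∀ l, 0 ≤ f l) → (∀ l, f l ≤ 1) →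
      (∀ l, 0 ≤ g l) → (∀ l, g l ≤ 1) → Integrable (fun l => |f l - g l|) (μ R0) := by
    intro f g hf hg hf0 hf1 hg0 hg1
    exact int_bdd (μ R0) _ (hf.sub hg).abs 1
      (fun l => by
        rw [abs_abs]
        exact abs_le.2 ⟨by linarith [hf0 l, hg1 l], by linarith [hf1 l, hg0 l]⟩)
  have tri : ∫ l, |F Pa l - F Pc l| ∂(μ R0)
      ≤ ∫ l, (|F Pa l - F Pb l| + |F Pb l - F Pc l|) ∂(μ R0) := by
    apply integral_mono (hint _ _ mFa mFc b0a b1a b0c b1c)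
      ((hint _ _ mFa mFb b0a b1a b0b b1b).add (hint _ _ mFb mFc b0b b1b b0c b1c))
    intro l
    exact abs_sub_le _ _ _
  rw [integral_add (hint _ _ mFa mFb b0a b1a b0b b1b) (hint _ _ mFb mFc b0b b1b b0c b1c),
    Dab, Dbc, Dac] at tri
  linarith
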